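/- (PAC-Bayes generalization bound.) Let (H, ℋ) be a measurable space of hypotheses, D a probability measure on a data space 𝒳, and ℓ : H × 𝒳 → [0,1] a jointly measurable loss. Let R be a fixed (prior) probability measure on H, let X₁, …, X_n be i.i.d. with law D, and fix δ ∈ (0,1). Then with probability at least 1 − δ over the sample, simultaneously for every probability measure Q on H with KL(Q ‖ R) < ∞: | E_{h∼Q} E_{x∼D}[ℓ(h,x)] − (1/n) Σ_{i=1}^n E_{h∼Q}[ℓ(h, X_i)] | ≤ √( 2 ( KL(Q ‖ R) + log(2√n / δ) ) / n ). -/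

import Mathlib

open MeasureTheory
open scoped ENNReal Classical

/-- Kullback–Leibler divergence `KL(Q ‖ R)`, valued in `ℝ≥0∞`: equal to
`∫ log (dQ/dR) dQ` when `Q ≪ R` and the log-likelihood ratio is `Q`-integrable,
and `∞` otherwise. -/
noncomputable def klDiv {α : Type*} [MeasurableSpace α] (μ ν : Measure α) : ℝ≥0∞ :=
  if μ ≪ ν ∧ Integrable (llr μ ν) μ then ENNReal.ofReal (∫ x, llr μ ν x ∂μ) else ⊤


section PBAux
open Real ENNReal

lemma pb_aux_Dpos {p : ℝ} (hp0 : 0 ≤ p) (hp1 : p ≤ 1) (t : ℝ) :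
    0 < 1 - p + p * exp t := by
  nlinarith [exp_pos t, mul_nonneg hp0 (exp_pos t).le]

lemma pb_hoeffding_scalar {p : ℝ} (hp0 : 0 ≤ p) (hp1 : p ≤ 1) (t : ℝ) :
    1 - p + p * exp t ≤ exp (p * t + t ^ 2 / 8) := by
  set Df : ℝ → ℝ := fun t => 1 - p + p * exp t with hDf
  have hDpos : ∀ t, 0 < Df t := pb_aux_Dpos hp0 hp1
  set φ : ℝ → ℝ := fun t => p * t + t ^ 2 / 8 - Real.log (Df t) with hφdef
  set φ' : ℝ → ℝ := fun t => p + t / 4 - p * exp t / Df t with hφ'def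
  have hD : ∀ t, HasDerivAt Df (p * exp t) t := by
    intro t
    exact ((Real.hasDerivAt_exp t).const_mul p).const_add (1 - p)
  have hφ : ∀ t, HasDerivAt φ (φ' t) t := by
    intro t
    have h1 : HasDerivAt (fun t : ℝ => p * t + t ^ 2 / 8) (p + t / 4) t := by
      have := ((hasDerivAt_id t).const_mul p).add ((hasDerivAt_pow 2 t).div_const 8)
      refine this.congr_deriv ?_
      ring
    have h2 : HasDerivAt (fun t => Real.log (Df t)) (p * exp t / Df t) t :=
      (hD t).log (hDpos t).ne'
    exact h1.sub h2
  have hφ' : ∀ t, HasDerivAt φ' (1 / 4 - p * (1 - p) * exp t / (Df t) ^ 2) t := by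
    intro t
    have h1 : HasDerivAt (fun t : ℝ => p + t / 4) (1 / 4) t := by
      simpa using ((hasDerivAt_id t).div_const 4).const_add p
    have h2 : HasDerivAt (fun t => p * exp t / Df t)
        ((p * exp t * Df t - p * exp t * (p * exp t)) / (Df t) ^ 2) t :=
      ((Real.hasDerivAt_exp t).const_mul p).div (hD t) (hDpos t).ne'
    have := h1.sub h2
    refine this.congr_deriv ?_
    have : p * exp t * Df t - p * exp t * (p * exp t) = p * (1 - p) * exp t := by
      simp only [hDf]; ring
    rw [this]
  have hφ''nonneg : ∀ t, 0 ≤ 1 / 4 - p * (1 - p) * exp t / (Df t) ^ 2 := by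
    intro t
    rw [sub_nonneg, div_le_iff₀ (pow_pos (hDpos t) 2)]
    have hDt : Df t = (1 - p) + p * exp t := by simp [hDf, sub_add_eq_add_sub]
    nlinarith [sq_nonneg ((1 - p) - p * exp t), hDpos t]
  have hφ'mono : Monotone φ' :=
    monotone_of_deriv_nonneg (fun t => (hφ' t).differentiableAt)
      (fun t => by rw [(hφ' t).deriv]; exact hφ''nonneg t)
  have hφ'0 : φ' 0 = 0 := by
    simp [hφ'def, hDf]
  have key : 0 ≤ φ t := by
    have hφ0 : φ 0 = 0 := by simp [hφdef, hDf]
    rcases le_total t 0 with ht | ht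
    · have hanti : AntitoneOn φ (Set.Iic 0) := by
        refine antitoneOn_of_deriv_nonpos (convex_Iic 0)
          (fun x _ => (hφ x).differentiableAt.continuousAt.continuousWithinAt)
          (fun x hx => (hφ x).differentiableAt.differentiableWithinAt) ?_
        intro x hx
        rw [(hφ x).deriv]
        have : φ' x ≤ φ' 0 := hφ'mono (le_of_lt (by simpa using hx))
        simpa [hφ'0] using this
      have := hanti ht Set.self_mem_Iic ht
      simpa [hφ0] using this
    · have hmono : MonotoneOn φ (Set.Ici 0) := by
        refine monotoneOn_of_deriv_nonneg (convex_Ici 0)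
          (fun x _ => (hφ x).differentiableAt.continuousAt.continuousWithinAt)
          (fun x hx => (hφ x).differentiableAt.differentiableWithinAt) ?_
        intro x hx
        rw [(hφ x).deriv]
        have : φ' 0 ≤ φ' x := hφ'mono (le_of_lt (by simpa using hx))
        simpa [hφ'0] using this
      have := hmono Set.self_mem_Ici ht ht
      simpa [hφ0] using this
  have := key
  rw [hφdef] at this
  have hlog : Real.log (Df t) ≤ p * t + t ^ 2 / 8 := by simpa using by linarith
  calc Df t = exp (Real.log (Df t)) := (Real.exp_log (hDpos t)).symm
    _ ≤ exp (p * t + t ^ 2 / 8) := exp_le_exp.2 hlog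

lemma pb_integrable_of_bounds {α : Type*} [MeasurableSpace α] {μ : Measure α} [IsFiniteMeasure μ]
    {f : α → ℝ} {a b : ℝ} (hm : AEStronglyMeasurable f μ)
    (h1 : ∀ x, a ≤ f x) (h2 : ∀ x, f x ≤ b) : Integrable f μ :=
  ⟨hm, HasFiniteIntegral.of_bounded (C := max |a| |b|) (Filter.Eventually.of_forall fun x =>
    abs_le.2 ⟨by have := h1 x; have := neg_abs_le a; have := le_max_left |a| |b|; linarith,
      by have := h2 x; have := le_abs_self b; have := le_max_right |a| |b|; linarith⟩)⟩



lemma pb_mgf_one {𝒳 : Type*} [MeasurableSpace 𝒳] (D : Measure 𝒳) [IsProbabilityMeasure D]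
    {g : 𝒳 → ℝ} (hg : Measurable g) (h0 : ∀ x, 0 ≤ g x) (h1 : ∀ x, g x ≤ 1) (t : ℝ) :
    ∫ x, exp (t * g x) ∂D ≤ exp (t * (∫ x, g x ∂D) + t ^ 2 / 8) := by
  have hgint : Integrable g D := pb_integrable_of_bounds hg.aestronglyMeasurable h0 h1
  have hm0 : 0 ≤ ∫ x, g x ∂D := integral_nonneg h0
  have hm1 : (∫ x, g x ∂D) ≤ 1 := by
    calc (∫ x, g x ∂D) ≤ ∫ _, (1:ℝ) ∂D := integral_mono hgint (integrable_const 1) h1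
      _ = 1 := by simp
  have pb : ∀ x, exp (t * g x) ≤ 1 + g x * (exp t - 1) := by
    intro x
    have := convexOn_exp.2 (Set.mem_univ (0:ℝ)) (Set.mem_univ t)
      (show (0:ℝ) ≤ 1 - g x by linarith [h1 x]) (h0 x)
      (show (1 - g x) + g x = 1 by ring)
    simp only [smul_eq_mul, mul_zero, zero_add, Real.exp_zero, mul_one] at this
    calc exp (t * g x) = exp (g x * t) := by rw [mul_comm]
      _ ≤ 1 - g x + g x * exp t := this
      _ = 1 + g x * (exp t - 1) := by ring
  have int1 : Integrable (fun x => exp (t * g x)) D := by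
    refine pb_integrable_of_bounds (a := 0) (b := exp |t|)
      ((Real.continuous_exp.measurable.comp (hg.const_mul t)).aestronglyMeasurable)
      (fun x => (exp_pos _).le) (fun x => ?_)
    refine exp_le_exp.2 ?_
    calc t * g x ≤ |t * g x| := le_abs_self _
      _ = |t| * |g x| := abs_mul _ _
      _ ≤ |t| * 1 := by
          refine mul_le_mul_of_nonneg_left ?_ (abs_nonneg t)
          rw [abs_le]; exact ⟨by linarith [h0 x], h1 x⟩
      _ = |t| := mul_one _
  have int2 : Integrable (fun x => 1 + g x * (exp t - 1)) D :=
    (integrable_const 1).add (hgint.mul_const _)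
  calc ∫ x, exp (t * g x) ∂D ≤ ∫ x, (1 + g x * (exp t - 1)) ∂D := integral_mono int1 int2 pb
    _ = 1 + (∫ x, g x ∂D) * (exp t - 1) := by
        rw [integral_add (integrable_const 1) (hgint.mul_const _), integral_mul_const]
        simp
    _ = 1 - (∫ x, g x ∂D) + (∫ x, g x ∂D) * exp t := by ring
    _ ≤ exp ((∫ x, g x ∂D) * t + t ^ 2 / 8) := pb_hoeffding_scalar hm0 hm1 t
    _ = exp (t * (∫ x, g x ∂D) + t ^ 2 / 8) := by rw [mul_comm (∫ x, g x ∂D) t]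

lemma pb_mgf_pi {𝒳 : Type*} [MeasurableSpace 𝒳] (D : Measure 𝒳) [IsProbabilityMeasure D]
    {g : 𝒳 → ℝ} (hg : Measurable g) (h0 : ∀ x, 0 ≤ g x) (h1 : ∀ x, g x ≤ 1)
    (n : ℕ) (hn : 0 < n) (lam : ℝ) :
    ∫ xs : Fin n → 𝒳, exp (lam * ((∫ x, g x ∂D) - (1 / n) * ∑ i, g (xs i)))
        ∂(Measure.pi fun _ : Fin n => D)
      ≤ exp (lam ^ 2 * (1 / (8 * n))) := by
  letI : MeasureSpace 𝒳 := ⟨D⟩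
  haveI : SigmaFinite (volume : Measure 𝒳) := (inferInstance : SigmaFinite D)
  set m : ℝ := ∫ x, g x ∂D with hm
  set t : ℝ := -(lam / n) with ht
  have hpi : (Measure.pi fun _ : Fin n => D) = (volume : Measure (Fin n → 𝒳)) := rfl
  have hsplit : ∀ xs : Fin n → 𝒳,
      exp (lam * (m - (1 / n) * ∑ i, g (xs i)))
        = exp (lam * m) * ∏ i : Fin n, exp (t * g (xs i)) := by
    intro xs
    rw [← Real.exp_sum, ← Real.exp_add]
    congr 1
    have hn' : (n:ℝ) ≠ 0 := Nat.cast_ne_zero.2 hn.ne'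
    rw [← Finset.mul_sum, ht]
    field_simp
    ring
  rw [hpi]
  simp_rw [hsplit]
  rw [integral_const_mul, show (volume : Measure (Fin n → 𝒳)) = Measure.pi fun _ => volume from rfl,
    integral_fintype_prod_eq_pow (ι := Fin n) (fun x => exp (t * g x))]
  simp only [Fintype.card_fin]
  have hbase : (∫ x, exp (t * g x)) ≤ exp (t * m + t ^ 2 / 8) := pb_mgf_one D hg h0 h1 t
  have hbase0 : 0 ≤ ∫ x, exp (t * g x) := integral_nonneg fun x => (exp_pos _).le
  calc exp (lam * m) * (∫ x, exp (t * g x)) ^ n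
      ≤ exp (lam * m) * (exp (t * m + t ^ 2 / 8)) ^ n := by
        exact mul_le_mul_of_nonneg_left (pow_le_pow_left₀ hbase0 hbase n) (exp_pos _).le
    _ = exp (lam * m + n * (t * m + t ^ 2 / 8)) := by
        rw [← Real.exp_nat_mul, ← Real.exp_add]
    _ = exp (lam ^ 2 * (1 / (8 * n))) := by
        congr 1
        rw [ht]
        field_simp
        ring

/-- `∫⁻ a, k * exp (-b a²) = k * √(π/b)` for `b > 0`, `k ≥ 0`. -/
lemma pb_lintegral_gauss {k b : ℝ} (hb : 0 < b) (hk : 0 ≤ k) :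
    ∫⁻ a : ℝ, ENNReal.ofReal (k * exp (-b * a ^ 2)) ∂volume
      = ENNReal.ofReal (k * Real.sqrt (π / b)) := by
  rw [← ofReal_integral_eq_lintegral_ofReal ((integrable_exp_neg_mul_sq hb).const_mul k)
      (Filter.Eventually.of_forall fun a => mul_nonneg hk (exp_pos _).le)]
  rw [integral_const_mul, integral_gaussian]

/-- Gaussian linearization identity. -/
lemma pb_gauss_identity {s : ℝ} (hs : 0 < s) (d : ℝ) :
    ∫⁻ a : ℝ, ENNReal.ofReal (Real.sqrt (s / π) * exp (-s * a ^ 2 + 2 * s * a * d)) ∂volume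
      = ENNReal.ofReal (exp (s * d ^ 2)) := by
  have hrw : ∀ a : ℝ, Real.sqrt (s / π) * exp (-s * a ^ 2 + 2 * s * a * d)
      = (Real.sqrt (s / π) * exp (s * d ^ 2)) * exp (-s * (a - d) ^ 2) := by
    intro a
    rw [show (-s * a ^ 2 + 2 * s * a * d) = (s * d ^ 2) + (-s * (a - d) ^ 2) by ring,
      Real.exp_add, ← mul_assoc]
  simp_rw [hrw]
  have hint : Integrable (fun a : ℝ => exp (-s * (a - d) ^ 2)) volume :=
    (integrable_exp_neg_mul_sq hs).comp_sub_right d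
  rw [← ofReal_integral_eq_lintegral_ofReal (hint.const_mul _)
      (Filter.Eventually.of_forall fun a => mul_nonneg
        (mul_nonneg (Real.sqrt_nonneg _) (exp_pos _).le) (exp_pos _).le)]
  rw [integral_const_mul, integral_sub_right_eq_self (fun a => exp (-s * a ^ 2)) d,
    integral_gaussian]
  congr 1
  have hππ : (0:ℝ) < π := pi_pos
  have : Real.sqrt (s / π) * Real.sqrt (π / s) = 1 := by
    rw [← Real.sqrt_mul (by positivity)]
    rw [show s / π * (π / s) = 1 by field_simp]
    exact Real.sqrt_one
  calc Real.sqrt (s / π) * exp (s * d ^ 2) * Real.sqrt (π / s)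
      = exp (s * d ^ 2) * (Real.sqrt (s / π) * Real.sqrt (π / s)) := by ring
    _ = exp (s * d ^ 2) := by rw [this, mul_one]

/-- Bound on `E exp (s Δ²)` from a two-sided mgf bound, via Gaussian linearization. -/
lemma pb_exp_sq_bound {Ω : Type*} [MeasurableSpace Ω] (P : Measure Ω) [IsProbabilityMeasure P]
    {Δ : Ω → ℝ} (hΔm : Measurable Δ) (hΔb : ∀ ω, |Δ ω| ≤ 1)
    {s c : ℝ} (hs : 0 < s) (hc : 0 < c) (hsc : s * (4 * c) < 1)
    (hmgf : ∀ lam : ℝ, ∫ ω, exp (lam * Δ ω) ∂P ≤ exp (lam ^ 2 * c)) :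
    ∫⁻ ω, ENNReal.ofReal (exp (s * Δ ω ^ 2)) ∂P
      ≤ ENNReal.ofReal (Real.sqrt (s / π) * Real.sqrt (π / (s - 4 * s ^ 2 * c))) := by
  have hb : 0 < s - 4 * s ^ 2 * c := by nlinarith
  calc ∫⁻ ω, ENNReal.ofReal (exp (s * Δ ω ^ 2)) ∂P
      = ∫⁻ ω, ∫⁻ a : ℝ, ENNReal.ofReal
          (Real.sqrt (s / π) * exp (-s * a ^ 2 + 2 * s * a * Δ ω)) ∂volume ∂P := by
        refine lintegral_congr fun ω => ?_
        rw [pb_gauss_identity hs (Δ ω)]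
    _ = ∫⁻ a : ℝ, ∫⁻ ω, ENNReal.ofReal
          (Real.sqrt (s / π) * exp (-s * a ^ 2 + 2 * s * a * Δ ω)) ∂P ∂volume := by
        refine lintegral_lintegral_swap ?_
        refine (ENNReal.measurable_ofReal.comp ?_).aemeasurable
        refine Measurable.const_mul ?_ _
        refine Real.continuous_exp.measurable.comp ?_
        refine Measurable.add ?_ ?_
        · exact ((measurable_snd.pow_const 2).const_mul (-s))
        · exact (measurable_snd.const_mul (2 * s)).mul (hΔm.comp measurable_fst)
    _ ≤ ∫⁻ a : ℝ, ENNReal.ofReal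
          (Real.sqrt (s / π) * exp (-(s - 4 * s ^ 2 * c) * a ^ 2)) ∂volume := by
        refine lintegral_mono fun a => ?_
        have hsplit : ∀ ω, Real.sqrt (s / π) * exp (-s * a ^ 2 + 2 * s * a * Δ ω)
            = (Real.sqrt (s / π) * exp (-s * a ^ 2)) * exp ((2 * s * a) * Δ ω) := by
          intro ω
          rw [show (-s * a ^ 2 + 2 * s * a * Δ ω) = (-s * a ^ 2) + ((2 * s * a) * Δ ω) by ring,
            Real.exp_add, ← mul_assoc]
        simp_rw [hsplit, ENNReal.ofReal_mul (mul_nonneg (Real.sqrt_nonneg (s / π)) (exp_pos (-s * a ^ 2)).le)]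
        rw [lintegral_const_mul' _ _ ENNReal.ofReal_ne_top]
        have hint : Integrable (fun ω => exp ((2 * s * a) * Δ ω)) P := by
          refine ⟨(Real.continuous_exp.measurable.comp (hΔm.const_mul _)).aestronglyMeasurable,
            HasFiniteIntegral.of_bounded (C := exp |2 * s * a|)
              (Filter.Eventually.of_forall fun ω => ?_)⟩
          rw [Real.norm_eq_abs, abs_of_pos (exp_pos _)]
          refine exp_le_exp.2 ?_
          calc (2 * s * a) * Δ ω ≤ |(2 * s * a) * Δ ω| := le_abs_self _
            _ = |2 * s * a| * |Δ ω| := abs_mul _ _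
            _ ≤ |2 * s * a| * 1 := mul_le_mul_of_nonneg_left (hΔb ω) (abs_nonneg _)
            _ = |2 * s * a| := mul_one _
        rw [← ofReal_integral_eq_lintegral_ofReal hint
          (Filter.Eventually.of_forall fun ω => (exp_pos _).le)]
        calc ENNReal.ofReal (Real.sqrt (s / π) * exp (-s * a ^ 2))
              * ENNReal.ofReal (∫ ω, exp ((2 * s * a) * Δ ω) ∂P)
            ≤ ENNReal.ofReal (Real.sqrt (s / π) * exp (-s * a ^ 2))
              * ENNReal.ofReal (exp ((2 * s * a) ^ 2 * c)) :=
              mul_le_mul_right (ENNReal.ofReal_le_ofReal (hmgf (2 * s * a))) _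
          _ = ENNReal.ofReal (Real.sqrt (s / π) * exp (-(s - 4 * s ^ 2 * c) * a ^ 2)) := by
              rw [← ENNReal.ofReal_mul (mul_nonneg (Real.sqrt_nonneg _) (exp_pos _).le)]
              congr 1
              rw [mul_assoc, ← Real.exp_add]
              congr 2
              ring
    _ = ENNReal.ofReal (Real.sqrt (s / π) * Real.sqrt (π / (s - 4 * s ^ 2 * c))) := by
        rw [pb_lintegral_gauss hb (Real.sqrt_nonneg _)]

/-- Nonnegativity of KL divergence. -/
lemma pb_integral_llr_nonneg {α : Type*} [MeasurableSpace α] {μ ν : Measure α}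
    [IsProbabilityMeasure μ] [IsProbabilityMeasure ν]
    (hμν : μ ≪ ν) (h_int : Integrable (llr μ ν) μ) : 0 ≤ ∫ x, llr μ ν x ∂μ := by
  set g : α → ℝ := fun x => ((μ.rnDeriv ν x).toReal)⁻¹ with hg
  have hgm : Measurable g := (Measure.measurable_rnDeriv μ ν).ennreal_toReal.inv
  have hpos : ∀ᵐ x ∂μ, 0 < (μ.rnDeriv ν x).toReal := by
    filter_upwards [Measure.rnDeriv_pos hμν, hμν.ae_le (Measure.rnDeriv_lt_top μ ν)]
      with x h1 h2
    exact ENNReal.toReal_pos h1.ne' h2.ne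
  -- ∫⁻ ofReal g ≤ 1
  have hlint : ∫⁻ x, ENNReal.ofReal (g x) ∂μ ≤ 1 := by
    have hae : ∀ᵐ x ∂μ, ENNReal.ofReal (g x) = (μ.rnDeriv ν x)⁻¹ := by
      filter_upwards [Measure.rnDeriv_pos hμν, hμν.ae_le (Measure.rnDeriv_lt_top μ ν)]
        with x h1 h2
      rw [hg]
      simp only [← ENNReal.toReal_inv]
      exact ENNReal.ofReal_toReal (by simp [h1.ne'])
    rw [lintegral_congr_ae hae]
    have hwd := lintegral_withDensity_eq_lintegral_mul ν (Measure.measurable_rnDeriv μ ν)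
      (Measure.measurable_rnDeriv μ ν).inv
    rw [Measure.withDensity_rnDeriv_eq μ ν hμν] at hwd
    rw [show (∫⁻ a, (μ.rnDeriv ν a)⁻¹ ∂μ) = ∫⁻ a, (μ.rnDeriv ν)⁻¹ a ∂μ from rfl, hwd]
    simp only [Pi.mul_apply]
    have : ∀ x, (μ.rnDeriv ν x) * (μ.rnDeriv ν x)⁻¹ ≤ 1 := by
      intro x
      rcases eq_or_ne (μ.rnDeriv ν x) 0 with h | h
      · simp [h]
      rcases eq_or_ne (μ.rnDeriv ν x) ∞ with h' | h'
      · simp [h']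
      · rw [ENNReal.mul_inv_cancel h h']
    calc ∫⁻ x, (μ.rnDeriv ν x) * (μ.rnDeriv ν x)⁻¹ ∂ν ≤ ∫⁻ _, 1 ∂ν :=
          lintegral_mono this
      _ = 1 := by simp
  have hgint : Integrable g μ := by
    refine ⟨hgm.aestronglyMeasurable, ?_⟩
    rw [hasFiniteIntegral_iff_ofReal (Filter.Eventually.of_forall fun x => by positivity)]
    exact lt_of_le_of_lt hlint ENNReal.one_lt_top
  have hgint_le : ∫ x, g x ∂μ ≤ 1 := by
    rw [integral_eq_lintegral_of_nonneg_ae (Filter.Eventually.of_forall fun x => by positivity)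
      hgm.aestronglyMeasurable]
    exact le_trans (ENNReal.toReal_mono ENNReal.one_ne_top hlint) (by simp)
  have key : ∀ᵐ x ∂μ, -(llr μ ν x) ≤ g x - 1 := by
    filter_upwards [hpos] with x hx
    rw [llr_def, ← Real.log_inv]
    exact Real.log_le_sub_one_of_pos (by positivity)
  have := integral_mono_ae h_int.neg (hgint.sub (integrable_const 1)) key
  simp only [Pi.neg_apply, Pi.sub_apply] at this
  rw [integral_neg, integral_sub hgint (integrable_const 1)] at this
  simp only [integral_const, probReal_univ, ENNReal.toReal_one, smul_eq_mul, one_mul] at this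
  linarith

/-- Donsker–Varadhan inequality (one direction), for bounded nonnegative `f`. -/
lemma pb_donsker_varadhan {α : Type*} [MeasurableSpace α] {Q R : Measure α}
    [IsProbabilityMeasure Q] [IsProbabilityMeasure R]
    (hQR : Q ≪ R) (h_int : Integrable (llr Q R) Q) {f : α → ℝ} (hf : Measurable f)
    {B : ℝ} (hf0 : ∀ x, 0 ≤ f x) (hfB : ∀ x, f x ≤ B) :
    ∫ x, f x ∂Q ≤ ∫ x, llr Q R x ∂Q + Real.log (∫ x, exp (f x) ∂ R) := by
  have hfR : Integrable (fun x => exp (f x)) R :=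
    pb_integrable_of_bounds (a := 0) (b := exp B)
      (Real.continuous_exp.measurable.comp hf).aestronglyMeasurable
      (fun x => (exp_pos _).le) (fun x => exp_le_exp.2 (hfB x))
  have hfQ : Integrable f Q :=
    pb_integrable_of_bounds hf.aestronglyMeasurable hf0 hfB
  haveI : IsProbabilityMeasure (R.tilted f) := isProbabilityMeasure_tilted hfR
  have hQt : Q ≪ R.tilted f := hQR.trans (absolutelyContinuous_tilted hfR)
  have h_int' : Integrable (llr Q (R.tilted f)) Q :=
    integrable_llr_tilted_right hQR hfQ h_int hfR
  have hkey : ∫ x, llr Q (R.tilted f) x ∂Q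
      = ∫ x, llr Q R x ∂Q - ∫ x, f x ∂Q + Real.log (∫ x, exp (f x) ∂ R) :=
    integral_llr_tilted_right hQR hfQ hfR h_int
  have hnn : 0 ≤ ∫ x, llr Q (R.tilted f) x ∂Q := pb_integral_llr_nonneg hQt h_int'
  linarith [hkey ▸ hnn]

set_option maxHeartbeats 2000000 in
/-- PAC-Bayes generalization bound: for a `[0,1]`-valued loss, a prior `R` on hypotheses and
an i.i.d. sample `X₁, …, X_n ∼ D`, with probability at least `1 − δ` over the sample,
simultaneously for all posteriors `Q` with `KL(Q‖R) < ∞`,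
`|E_{h∼Q} E_{x∼D} ℓ(h,x) − (1/n) Σᵢ E_{h∼Q} ℓ(h,Xᵢ)| ≤ √(2 (KL(Q‖R) + log(2√n/δ)) / n)`. -/
theorem pac_bayes_generalization {H 𝒳 : Type*} [MeasurableSpace H] [MeasurableSpace 𝒳]
    (D : Measure 𝒳) [IsProbabilityMeasure D]
    (ℓ : H → 𝒳 → ℝ) (hℓm : Measurable fun p : H × 𝒳 => ℓ p.1 p.2)
    (hℓ0 : ∀ h x, 0 ≤ ℓ h x) (hℓ1 : ∀ h x, ℓ h x ≤ 1)
    (R : Measure H) [IsProbabilityMeasure R]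
    (n : ℕ) (hn : 0 < n) (δ : ℝ) (hδ0 : 0 < δ) (hδ1 : δ < 1) :
    ENNReal.ofReal (1 - δ)
      ≤ (Measure.pi fun _ : Fin n => D)
          {xs | ∀ Q : Measure H, IsProbabilityMeasure Q → klDiv Q R ≠ ⊤ →
            |(∫ h, ∫ x, ℓ h x ∂D ∂Q) - (1 / n : ℝ) * ∑ i : Fin n, ∫ h, ℓ h (xs i) ∂Q|
              ≤ Real.sqrt (2 * ((klDiv Q R).toReal + Real.log (2 * Real.sqrt n / δ)) / n)} := by
  have hn' : (0:ℝ) < n := Nat.cast_pos.2 hn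
  have hn'' : (n:ℝ) ≠ 0 := hn'.ne'
  have hsqn : (1:ℝ) ≤ Real.sqrt n := by
    rw [show (1:ℝ) = Real.sqrt 1 by simp]
    exact Real.sqrt_le_sqrt (by exact_mod_cast hn)
  set P := Measure.pi fun _ : Fin n => D with hP
  set m : H → ℝ := fun h => ∫ x, ℓ h x ∂D with hm
  set Δ : H → (Fin n → 𝒳) → ℝ := fun h xs => m h - (1 / n : ℝ) * ∑ i, ℓ h (xs i) with hΔ
  set s : ℝ := n / 2 with hs
  have hs0 : 0 < s := by rw [hs]; positivity
  -- measurability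
  have hm_meas : Measurable m := hℓm.stronglyMeasurable.integral_prod_right'.measurable
  have hℓi_meas : ∀ i : Fin n, Measurable fun p : H × (Fin n → 𝒳) => ℓ p.1 (p.2 i) := fun i =>
    hℓm.comp (measurable_fst.prodMk ((measurable_pi_apply i).comp measurable_snd))
  have hΔmeas : Measurable fun p : H × (Fin n → 𝒳) => Δ p.1 p.2 := by
    refine Measurable.sub (hm_meas.comp measurable_fst) ?_
    exact (Finset.measurable_sum Finset.univ fun i _ => hℓi_meas i).const_mul _
  -- bounds
  have hm0 : ∀ h, 0 ≤ m h := fun h => integral_nonneg fun x => hℓ0 h x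
  have hm1 : ∀ h, m h ≤ 1 := fun h => by
    calc m h ≤ ∫ _, (1:ℝ) ∂D := integral_mono
          (pb_integrable_of_bounds (a := 0) (b := 1)
            ((hℓm.comp (measurable_const.prodMk measurable_id)).aestronglyMeasurable)
            (hℓ0 h) (hℓ1 h))
          (integrable_const 1) (hℓ1 h)
      _ = 1 := by simp
  have havg0 : ∀ h (xs : Fin n → 𝒳), 0 ≤ (1 / n : ℝ) * ∑ i, ℓ h (xs i) := fun h xs => by
    have : 0 ≤ ∑ i, ℓ h (xs i) := Finset.sum_nonneg fun i _ => hℓ0 h (xs i)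
    positivity
  have havg1 : ∀ h (xs : Fin n → 𝒳), (1 / n : ℝ) * ∑ i, ℓ h (xs i) ≤ 1 := fun h xs => by
    have hsum : ∑ i, ℓ h (xs i) ≤ n := by
      calc ∑ i, ℓ h (xs i) ≤ ∑ _i : Fin n, (1:ℝ) :=
            Finset.sum_le_sum fun i _ => hℓ1 h (xs i)
        _ = n := by simp
    rw [div_mul_eq_mul_div, one_mul, div_le_one hn']
    exact hsum
  have hΔb : ∀ h xs, |Δ h xs| ≤ 1 := fun h xs => by
    rw [abs_le]
    constructor
    · have := hm0 h; have := havg1 h xs; simp only [hΔ]; linarith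
    · have := hm1 h; have := havg0 h xs; simp only [hΔ]; linarith
  -- per-h exp-square bound
  have hEh : ∀ h, ∫⁻ xs, ENNReal.ofReal (exp (s * Δ h xs ^ 2)) ∂P ≤ ENNReal.ofReal 2 := by
    intro h
    have hδh : Measurable fun xs => Δ h xs :=
      hΔmeas.comp (measurable_const.prodMk measurable_id)
    have hmgf : ∀ lam : ℝ, ∫ xs, exp (lam * Δ h xs) ∂P ≤ exp (lam ^ 2 * (1 / (8 * n))) := by
      intro lam
      exact pb_mgf_pi D (hℓm.comp (measurable_const.prodMk measurable_id))
        (hℓ0 h) (hℓ1 h) n hn lam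
    have hsc : s * (4 * (1 / (8 * (n:ℝ)))) < 1 := by
      rw [hs]
      rw [show (n:ℝ) / 2 * (4 * (1 / (8 * n))) = 1/4 by field_simp; ring]
      norm_num
    have hb := pb_exp_sq_bound P hδh (fun xs => hΔb h xs) hs0
      (show (0:ℝ) < 1 / (8 * n) by positivity) hsc hmgf
    refine le_trans hb (ENNReal.ofReal_le_ofReal ?_)
    have hbb : s - 4 * s ^ 2 * (1 / (8 * (n:ℝ))) = 3 * n / 8 := by
      rw [hs]; field_simp; ring
    rw [hbb, ← Real.sqrt_mul (by positivity)]
    rw [show s / π * (π / (3 * (n:ℝ) / 8)) = 4/3 by rw [hs]; field_simp [Real.pi_ne_zero]; ring]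
    nlinarith [Real.sq_sqrt (show (0:ℝ) ≤ 4/3 by norm_num), Real.sqrt_nonneg (4/3 : ℝ)]
  -- Fubini + Markov
  set Zl : (Fin n → 𝒳) → ℝ≥0∞ :=
    fun xs => ∫⁻ h, ENNReal.ofReal (exp (s * Δ h xs ^ 2)) ∂ R with hZl
  have hFmeas : Measurable fun p : (Fin n → 𝒳) × H => ENNReal.ofReal (exp (s * Δ p.2 p.1 ^ 2)) := by
    refine ENNReal.measurable_ofReal.comp ?_
    refine Real.continuous_exp.measurable.comp ?_
    exact ((hΔmeas.comp measurable_swap).pow_const 2).const_mul s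
  have hZl_meas : Measurable Zl := hFmeas.lintegral_prod_right'
  have htotal : ∫⁻ xs, Zl xs ∂P ≤ ENNReal.ofReal 2 := by
    rw [hZl]
    rw [lintegral_lintegral_swap hFmeas.aemeasurable]
    calc ∫⁻ h, ∫⁻ xs, ENNReal.ofReal (exp (s * Δ h xs ^ 2)) ∂P ∂ R
        ≤ ∫⁻ _, ENNReal.ofReal 2 ∂ R := lintegral_mono fun h => hEh h
      _ = ENNReal.ofReal 2 := by simp
  set C : ℝ≥0∞ := ENNReal.ofReal (2 * Real.sqrt n / δ) with hC
  have hCr0 : (0:ℝ) < 2 * Real.sqrt n / δ := by positivity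
  have hC0 : C ≠ 0 := by rw [hC]; simp [ENNReal.ofReal_pos.2 hCr0, ne_of_gt]
  have hCtop : C ≠ ⊤ := ENNReal.ofReal_ne_top
  set A := {xs : Fin n → 𝒳 | Zl xs < C} with hA
  have hAmeas : MeasurableSet A := measurableSet_lt hZl_meas measurable_const
  have hcompl : P {xs | C ≤ Zl xs} ≤ ENNReal.ofReal δ := by
    calc P {xs | C ≤ Zl xs} ≤ (∫⁻ xs, Zl xs ∂P) / C :=
          meas_ge_le_lintegral_div hZl_meas.aemeasurable hC0 hCtop
      _ ≤ ENNReal.ofReal 2 / C := by gcongr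
      _ = ENNReal.ofReal (2 / (2 * Real.sqrt n / δ)) := by
          rw [hC, ENNReal.ofReal_div_of_pos hCr0]
      _ = ENNReal.ofReal (δ / Real.sqrt n) := by
          congr 1
          field_simp
      _ ≤ ENNReal.ofReal δ := by
          refine ENNReal.ofReal_le_ofReal ?_
          calc δ / Real.sqrt n ≤ δ / 1 := by
                refine div_le_div_of_nonneg_left hδ0.le ?_ hsqn
                norm_num
            _ = δ := div_one δ
  have hPA : ENNReal.ofReal (1 - δ) ≤ P A := by
    have hAc : Aᶜ = {xs | C ≤ Zl xs} := by
      ext xs; simp [hA, not_lt]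
    have h1 : P A = 1 - P Aᶜ := by
      rw [prob_compl_eq_one_sub hAmeas]
      rw [ENNReal.sub_sub_cancel ENNReal.one_ne_top prob_le_one]
    rw [h1, hAc]
    calc ENNReal.ofReal (1 - δ) = 1 - ENNReal.ofReal δ := by
          rw [ENNReal.ofReal_sub 1 hδ0.le, ENNReal.ofReal_one]
      _ ≤ 1 - P {xs | C ≤ Zl xs} := tsub_le_tsub_left hcompl 1
  refine le_trans hPA (measure_mono ?_)
  intro xs hxs
  intro Q hQprob hKL
  rw [klDiv] at hKL
  by_cases hcond : Q ≪ R ∧ Integrable (llr Q R) Q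
  swap
  · rw [if_neg hcond] at hKL; exact absurd rfl hKL
  obtain ⟨hQR, hllr⟩ := hcond
  haveI := hQprob
  set K := ∫ h, llr Q R h ∂Q with hK
  have hK0 : 0 ≤ K := pb_integral_llr_nonneg hQR hllr
  have hKL_toReal : (klDiv Q R).toReal = K := by
    rw [klDiv, if_pos ⟨hQR, hllr⟩, ENNReal.toReal_ofReal hK0]
  set f : H → ℝ := fun h => s * Δ h xs ^ 2 with hf
  have hfmeas : Measurable f :=
    (((hΔmeas.comp (measurable_id.prodMk measurable_const)).pow_const 2).const_mul s)
  have hf0 : ∀ h, 0 ≤ f h := fun h => mul_nonneg hs0.le (sq_nonneg _)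
  have hfB : ∀ h, f h ≤ s := fun h => by
    have h1 : Δ h xs ^ 2 ≤ 1 := by
      nlinarith [hΔb h xs, abs_nonneg (Δ h xs), sq_abs (Δ h xs)]
    show s * Δ h xs ^ 2 ≤ s
    nlinarith [hs0, h1]
  set Zr := ∫ h, exp (f h) ∂ R with hZr
  have hZr_int : Integrable (fun h => exp (f h)) R :=
    pb_integrable_of_bounds (a := 0) (b := exp s)
      (Real.continuous_exp.measurable.comp hfmeas).aestronglyMeasurable
      (fun h => (exp_pos _).le) (fun h => exp_le_exp.2 (hfB h))
  have hZr1 : (1:ℝ) ≤ Zr := by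
    calc (1:ℝ) = ∫ _, (1:ℝ) ∂ R := by simp
      _ ≤ Zr := integral_mono (integrable_const 1) hZr_int fun h => Real.one_le_exp (hf0 h)
  have hZr_eq : ENNReal.ofReal Zr = Zl xs := by
    rw [hZr, hZl]
    exact ofReal_integral_eq_lintegral_ofReal hZr_int
      (Filter.Eventually.of_forall fun h => (exp_pos _).le)
  have hZr_le : Zr ≤ 2 * Real.sqrt n / δ := by
    have := hxs
    rw [hA, Set.mem_setOf_eq, ← hZr_eq, hC] at this
    exact (ENNReal.ofReal_le_ofReal_iff hCr0.le).1 this.le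
  have hDV : ∫ h, f h ∂Q ≤ K + Real.log Zr :=
    pb_donsker_varadhan hQR hllr hfmeas hf0 hfB
  have hlog : Real.log Zr ≤ Real.log (2 * Real.sqrt n / δ) :=
    Real.log_le_log (by linarith) hZr_le
  have hfint_eq : ∫ h, f h ∂Q = s * ∫ h, Δ h xs ^ 2 ∂Q := by
    rw [hf]; exact integral_const_mul s _
  have hΔQint : Integrable (fun h => Δ h xs) Q :=
    pb_integrable_of_bounds (a := -1) (b := 1)
      (hΔmeas.comp (measurable_id.prodMk measurable_const)).aestronglyMeasurable
      (fun h => (abs_le.1 (hΔb h xs)).1) (fun h => (abs_le.1 (hΔb h xs)).2)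
  have hΔ2Qint : Integrable (fun h => Δ h xs ^ 2) Q :=
    pb_integrable_of_bounds (a := 0) (b := 1)
      ((hΔmeas.comp (measurable_id.prodMk measurable_const)).pow_const 2).aestronglyMeasurable
      (fun h => sq_nonneg _)
      (fun h => by nlinarith [hΔb h xs, abs_nonneg (Δ h xs), sq_abs (Δ h xs)])
  set c₀ := ∫ h, Δ h xs ∂Q with hc₀
  have hvar : c₀ ^ 2 ≤ ∫ h, Δ h xs ^ 2 ∂Q := by
    have h0 : 0 ≤ ∫ h, (Δ h xs - c₀) ^ 2 ∂Q := integral_nonneg fun h => sq_nonneg _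
    have hrw : (fun h => (Δ h xs - c₀) ^ 2)
        = fun h => (Δ h xs ^ 2 - 2 * c₀ * Δ h xs) + c₀ ^ 2 := funext fun h => by ring
    have hint1 : Integrable (fun h => Δ h xs ^ 2 - 2 * c₀ * Δ h xs) Q := by
      exact hΔ2Qint.sub (hΔQint.const_mul (2 * c₀))
    rw [hrw, integral_add hint1 (integrable_const _),
      integral_sub hΔ2Qint (hΔQint.const_mul (2 * c₀)), integral_const_mul, integral_const] at h0
    simp only [probReal_univ, ENNReal.toReal_one, smul_eq_mul, one_mul] at h0
    nlinarith [h0]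
  have hΔ2le : ∫ h, Δ h xs ^ 2 ∂Q ≤ (K + Real.log (2 * Real.sqrt n / δ)) / s := by
    rw [le_div_iff₀ hs0, mul_comm]
    calc s * ∫ h, Δ h xs ^ 2 ∂Q = ∫ h, f h ∂Q := hfint_eq.symm
      _ ≤ K + Real.log Zr := hDV
      _ ≤ K + Real.log (2 * Real.sqrt n / δ) := by linarith
  have hfinal : |c₀| ≤ Real.sqrt (2 * (K + Real.log (2 * Real.sqrt n / δ)) / n) := by
    rw [← Real.sqrt_sq_eq_abs]
    refine Real.sqrt_le_sqrt ?_
    calc c₀ ^ 2 ≤ ∫ h, Δ h xs ^ 2 ∂Q := hvar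
      _ ≤ (K + Real.log (2 * Real.sqrt n / δ)) / s := hΔ2le
      _ = 2 * (K + Real.log (2 * Real.sqrt n / δ)) / n := by
          rw [hs]; field_simp
  have hc₀_eq : c₀ = (∫ h, m h ∂Q) - (1 / n : ℝ) * ∑ i, ∫ h, ℓ h (xs i) ∂Q := by
    have hqint_m : Integrable m Q :=
      pb_integrable_of_bounds (a := 0) (b := 1) hm_meas.aestronglyMeasurable hm0 hm1
    have hqint_i : ∀ i : Fin n, Integrable (fun h => ℓ h (xs i)) Q := fun i =>
      pb_integrable_of_bounds (a := 0) (b := 1)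
        (hℓm.comp (measurable_id.prodMk measurable_const)).aestronglyMeasurable
        (fun h => hℓ0 h (xs i)) (fun h => hℓ1 h (xs i))
    have hqint_sum : Integrable (fun h => ∑ i, ℓ h (xs i)) Q :=
      integrable_finset_sum Finset.univ fun i _ => hqint_i i
    rw [hc₀, hΔ]
    rw [integral_sub hqint_m (hqint_sum.const_mul _), integral_const_mul,
      integral_finset_sum Finset.univ fun i _ => hqint_i i]
  rw [hKL_toReal]
  calc |(∫ h, ∫ x, ℓ h x ∂D ∂Q) - (1 / n : ℝ) * ∑ i : Fin n, ∫ h, ℓ h (xs i) ∂Q|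
      = |c₀| := by rw [hc₀_eq]
    _ ≤ Real.sqrt (2 * (K + Real.log (2 * Real.sqrt n / δ)) / n) := hfinal

end PBAux
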